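/- Let P ⊆ M_ℝ be a polyhedral set defined by inequalities ν_j(ξ) + α_j ≥ 0 (j = 1,…,r) with all α_j > 0, and assume 0 ∈ int(P). Given ν_0 ∈ N_ℝ and α_0 > 0, the set P is contained in the affine half-space { ξ | ν_0(ξ) + α_0 ≥ 0 } if and only if ν_0/α_0 lies in the convex hull of { ν_j/α_j : j = 1,…,r } ∪ { 0 }. -/

import Mathlib

/-- Let `P = {ξ | ν j ξ + α j ≥ 0}` with all `α j > 0` and `0 ∈ int P`.  Given `ν₀` and
`α₀ > 0`, `P` is contained in the affine half-space `{ξ | ν₀ ξ + α₀ ≥ 0}` if and only if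
`ν₀ / α₀` lies in the convex hull of `{ν j / α j} ∪ {0}`. -/
theorem stmt_2 {V : Type*} [NormedAddCommGroup V] [NormedSpace ℝ V]
    [FiniteDimensional ℝ V] (r : ℕ) (ν : Fin r → V →ₗ[ℝ] ℝ) (α : Fin r → ℝ)
    (hα : ∀ j, 0 < α j) (P : Set V)
    (hP : P = {ξ : V | ∀ j, ν j ξ + α j ≥ 0})
    (h0 : (0 : V) ∈ interior P)
    (ν₀ : V →ₗ[ℝ] ℝ) (α₀ : ℝ) (hα₀ : 0 < α₀) :
    (∀ ξ ∈ P, ν₀ ξ + α₀ ≥ 0) ↔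
      α₀⁻¹ • ν₀ ∈ convexHull ℝ (Set.range (fun j => (α j)⁻¹ • ν j) ∪ {0}) := by
  set S : Set (V →ₗ[ℝ] ℝ) := Set.range (fun j => (α j)⁻¹ • ν j) ∪ {0} with hS
  constructor
  · -- hard direction: separation argument, by contrapositive
    intro h
    by_contra hmem
    -- transport to a coordinate space `Fin n → ℝ`
    set T : (V →ₗ[ℝ] ℝ) ≃ₗ[ℝ] (Fin (Module.finrank ℝ (V →ₗ[ℝ] ℝ)) → ℝ) :=
      (Module.finBasis ℝ (V →ₗ[ℝ] ℝ)).equivFun with hT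
    have hSfin : S.Finite := by
      rw [hS]; exact (Set.finite_range _).union (Set.finite_singleton 0)
    have hKconv : Convex ℝ (convexHull ℝ (T '' S)) := convex_convexHull ℝ _
    have hKcl : IsClosed (convexHull ℝ (T '' S)) :=
      ((hSfin.image T).isCompact_convexHull ℝ).isClosed
    have himg := T.toLinearMap.image_convexHull S
    simp only [LinearEquiv.coe_coe] at himg
    have hTnot : T (α₀⁻¹ • ν₀) ∉ convexHull ℝ (T '' S) := by
      rw [← himg]
      rintro ⟨y, hy, hey⟩
      exact hmem (T.injective hey ▸ hy)
    obtain ⟨f, u, hfx, hfb⟩ := geometric_hahn_banach_point_closed hKconv hKcl hTnot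
    -- `0 ∈ S`, so `u < f (T 0) = 0`
    have h0S : (0 : V →ₗ[ℝ] ℝ) ∈ S := by rw [hS]; exact Set.mem_union_right _ (Set.mem_singleton 0)
    have hu0 : u < 0 := by
      have := hfb (T 0) (subset_convexHull ℝ _ ⟨0, h0S, rfl⟩)
      simpa using this
    -- realize `f ∘ T` as evaluation at a point `ξ : V`
    have : Module.IsReflexive ℝ V := inferInstance
    set φ : Module.Dual ℝ (Module.Dual ℝ V) := f.toLinearMap ∘ₗ T.toLinearMap with hφ
    set ξ : V := (Module.evalEquiv ℝ V).symm φ with hξ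
    have hev : ∀ w : V →ₗ[ℝ] ℝ, w ξ = f (T w) := fun w =>
      Module.apply_evalEquiv_symm_apply ℝ V w φ
    -- the rescaled point `(-u)⁻¹ • ξ` lies in `P` but violates the half-space
    set ξ' : V := (-u)⁻¹ • ξ with hξ'
    have hunegpos : (0:ℝ) < -u := by linarith
    have hξ'P : ξ' ∈ P := by
      rw [hP]
      intro j
      have hj : u < ((α j)⁻¹ • ν j) ξ := by
        rw [hev]
        exact hfb _ (subset_convexHull ℝ _ ⟨_, Set.mem_union_left _ ⟨j, rfl⟩, rfl⟩)
      have hj' : (α j)⁻¹ * ν j ξ > u := by simpa using hj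
      have : ν j ξ' = (-u)⁻¹ * ν j ξ := by simp [hξ']
      rw [this]
      have hαj := hα j
      rw [ge_iff_le, ← sub_nonneg]
      have h1 : ν j ξ > α j * u := by
        have h := mul_lt_mul_of_pos_left hj' hαj
        rwa [← mul_assoc, mul_inv_cancel₀ hαj.ne', one_mul] at h
      have h2 : (-u)⁻¹ * ν j ξ ≥ (-u)⁻¹ * (α j * u) := by
        apply mul_le_mul_of_nonneg_left (le_of_lt h1) (le_of_lt (inv_pos.mpr hunegpos))
      have h3 : (-u)⁻¹ * (α j * u) = -α j := by
        field_simp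
        rw [div_self hu0.ne]
      linarith
    have hν₀ : ν₀ ξ' + α₀ < 0 := by
      have hx : (α₀⁻¹ • ν₀) ξ < u := by rw [hev]; exact hfx
      have hx' : α₀⁻¹ * ν₀ ξ < u := by simpa using hx
      have h1 : ν₀ ξ < α₀ * u := by
        have := (inv_mul_lt_iff₀ hα₀).mp hx'
        linarith
      have : ν₀ ξ' = (-u)⁻¹ * ν₀ ξ := by simp [hξ']
      rw [this]
      have h2 : (-u)⁻¹ * ν₀ ξ < (-u)⁻¹ * (α₀ * u) :=
        mul_lt_mul_of_pos_left h1 (inv_pos.mpr hunegpos)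
      have h3 : (-u)⁻¹ * (α₀ * u) = -α₀ := by field_simp; rw [div_self hu0.ne]
      linarith
    linarith [h ξ' hξ'P]
  · -- easy direction: the set of functionals satisfied on `P` is convex
    intro hmem ξ hξ
    set A : Set (V →ₗ[ℝ] ℝ) := {w | w ξ + 1 ≥ 0} with hA
    have hconv : Convex ℝ A := by
      intro w₁ h₁ w₂ h₂ a b ha hb hab
      simp only [hA, Set.mem_setOf_eq, LinearMap.add_apply, LinearMap.smul_apply,
        smul_eq_mul] at *
      nlinarith
    have hSA : S ⊆ A := by
      rintro w (⟨j, rfl⟩ | rfl)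
      · have : ν j ξ + α j ≥ 0 := by rw [hP] at hξ; exact hξ j
        have hαj := hα j
        simp only [hA, Set.mem_setOf_eq, LinearMap.smul_apply, smul_eq_mul]
        rw [ge_iff_le, ← sub_nonneg]
        have : (α j)⁻¹ * ν j ξ + 1 = (α j)⁻¹ * (ν j ξ + α j) := by field_simp
        rw [this]
        have := mul_nonneg (le_of_lt (inv_pos.mpr hαj)) ‹ν j ξ + α j ≥ 0›
        linarith
      · simp [hA]
    have hwA : α₀⁻¹ • ν₀ ∈ A := convexHull_min hSA hconv hmem
    simp only [hA, Set.mem_setOf_eq, LinearMap.smul_apply, smul_eq_mul] at hwA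
    have : α₀ * (α₀⁻¹ * ν₀ ξ + 1) = ν₀ ξ + α₀ := by field_simp
    nlinarith
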